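/- Suppose 0 < I_x < I_y < I_z and Ω satisfies Euler's equations with conserved quantities 2K = Σ I_αΩ_α² and |C|² = Σ I_α²Ω_α². If |C|² = 2K I_y and additionally 2K = I_y Ω_y(t₀)² at some time t₀, then Ω_x and Ω_z vanish identically and Ω is constant. -/

import Mathlib

lemma grow0_fwd (u u' : ℝ → ℝ) (hu : ∀ t, HasDerivAt u (u' t) t)
    (hpos : ∀ t, 0 ≤ u t) (L : ℝ) (hb : ∀ t, |u' t| ≤ L * u t)
    (t₀ : ℝ) (h0 : u t₀ = 0) : ∀ t, t₀ ≤ t → u t = 0 := by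
  intro t ht
  have key := norm_le_gronwallBound_of_norm_deriv_right_le (f := u) (f' := u')
    (δ := 0) (K := L) (ε := 0) (a := t₀) (b := t)
    (fun s _ => ((hu s).continuousAt).continuousWithinAt)
    (fun s _ => (hu s).hasDerivWithinAt)
    (by simp [h0])
    (fun s _ => by
      have := hb s
      simpa [Real.norm_eq_abs, abs_of_nonneg (hpos s)] using this)
    t ⟨ht, le_refl t⟩
  rw [gronwallBound_ε0_δ0] at key
  have := hpos t
  simp [Real.norm_eq_abs, abs_of_nonneg this] at key
  linarith

lemma grow0 (u u' : ℝ → ℝ) (hu : ∀ t, HasDerivAt u (u' t) t)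
    (hpos : ∀ t, 0 ≤ u t) (L : ℝ) (hb : ∀ t, |u' t| ≤ L * u t)
    (t₀ : ℝ) (h0 : u t₀ = 0) : ∀ t, u t = 0 := by
  intro t
  rcases le_total t₀ t with h | h
  · exact grow0_fwd u u' hu hpos L hb t₀ h0 t h
  · -- time reversal
    have hv : ∀ s, HasDerivAt (fun s => u (2 * t₀ - s)) (-(u' (2 * t₀ - s))) s := by
      intro s
      have hg : HasDerivAt (fun s : ℝ => 2 * t₀ - s) (-1) s := by
        simpa using (hasDerivAt_id s).const_sub (2 * t₀)
      have := (hu (2 * t₀ - s)).comp s hg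
      simpa [mul_comm, Function.comp_def] using this
    have := grow0_fwd (fun s => u (2 * t₀ - s)) (fun s => -(u' (2 * t₀ - s))) hv
      (fun s => hpos _) L (fun s => by simpa using hb (2 * t₀ - s)) t₀
      (by show u (2 * t₀ - t₀) = 0; rw [show 2 * t₀ - t₀ = t₀ by ring]; exact h0) (2 * t₀ - t) (by linarith)
    simpa using this

theorem stmt15 (Ωx Ωy Ωz : ℝ → ℝ)
    (hx : Differentiable ℝ Ωx) (hy : Differentiable ℝ Ωy) (hz : Differentiable ℝ Ωz)
    (Ix Iy Iz K Csq : ℝ)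
    (h0 : 0 < Ix) (hxy : Ix < Iy) (hyz : Iy < Iz)
    (ex : ∀ t, Ix * deriv Ωx t = (Iy - Iz) * Ωy t * Ωz t)
    (ey : ∀ t, Iy * deriv Ωy t = (Iz - Ix) * Ωz t * Ωx t)
    (ez : ∀ t, Iz * deriv Ωz t = (Ix - Iy) * Ωx t * Ωy t)
    (hK : ∀ t, 2 * K = Ix * (Ωx t)^2 + Iy * (Ωy t)^2 + Iz * (Ωz t)^2)
    (hC : ∀ t, Csq = Ix^2 * (Ωx t)^2 + Iy^2 * (Ωy t)^2 + Iz^2 * (Ωz t)^2)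
    (hcase : Csq = 2 * K * Iy)
    (t₀ : ℝ) (ht₀ : 2 * K = Iy * (Ωy t₀)^2) :
    (∀ t, Ωx t = 0 ∧ Ωz t = 0) ∧
    (∀ t s, Ωx t = Ωx s ∧ Ωy t = Ωy s ∧ Ωz t = Ωz s) := by
  have hIy : (0:ℝ) < Iy := lt_trans h0 hxy
  have hIz : (0:ℝ) < Iz := lt_trans hIy hyz
  -- bound on Ωy
  set B : ℝ := Real.sqrt (2 * K / Iy) with hB
  have hBnn : 0 ≤ B := Real.sqrt_nonneg _
  have hybd : ∀ t, |Ωy t| ≤ B := by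
    intro t
    have h1 : Iy * (Ωy t)^2 ≤ 2 * K := by nlinarith [sq_nonneg (Ωx t), sq_nonneg (Ωz t), hK t]
    have h2 : (Ωy t)^2 ≤ 2 * K / Iy := by
      rw [le_div_iff₀ hIy]; linarith
    calc |Ωy t| = Real.sqrt ((Ωy t)^2) := (Real.sqrt_sq_eq_abs _).symm
      _ ≤ B := Real.sqrt_le_sqrt h2
  -- the function u = Ωx² + Ωz²
  set u : ℝ → ℝ := fun t => (Ωx t)^2 + (Ωz t)^2 with hu_def
  set c : ℝ := (Iy - Iz) / Ix + (Ix - Iy) / Iz with hc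
  set u' : ℝ → ℝ := fun t => 2 * Ωy t * (Ωx t * Ωz t) * c with hu'
  have hud : ∀ t, HasDerivAt u (u' t) t := by
    intro t
    have hxd := (hx t).hasDerivAt
    have hzd := (hz t).hasDerivAt
    have h1 : HasDerivAt u (2 * Ωx t * deriv Ωx t + 2 * Ωz t * deriv Ωz t) t := by
      have := ((hxd.pow 2).add (hzd.pow 2))
      have e : u = Ωx ^ 2 + Ωz ^ 2 := by funext s; simp [hu_def]
      rw [e]
      simpa [mul_comm, mul_assoc, mul_left_comm] using this
    have hdx : deriv Ωx t = (Iy - Iz) / Ix * (Ωy t * Ωz t) := by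
      have := ex t; field_simp; linarith [this]
    have hdz : deriv Ωz t = (Ix - Iy) / Iz * (Ωx t * Ωy t) := by
      have := ez t; field_simp; linarith [this]
    convert h1 using 1
    rw [hdx, hdz]; simp only [hu', hc]; ring
  have hpos : ∀ t, 0 ≤ u t := fun t => by positivity
  have hbound : ∀ t, |u' t| ≤ (|c| * B) * u t := by
    intro t
    have h1 : |u' t| = |Ωy t| * |2 * (Ωx t * Ωz t)| * |c| := by
      rw [show u' t = Ωy t * (2 * (Ωx t * Ωz t)) * c by simp only [hu']; ring,
        abs_mul, abs_mul]
    rw [h1]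
    have h2 : |2 * (Ωx t * Ωz t)| ≤ u t := by
      simp only [hu_def]
      rw [abs_le]; constructor <;> nlinarith [sq_nonneg (Ωx t + Ωz t), sq_nonneg (Ωx t - Ωz t)]
    have h5 := hybd t
    have h4 : (0:ℝ) ≤ |c| := abs_nonneg _
    calc |Ωy t| * |2 * (Ωx t * Ωz t)| * |c|
        ≤ B * u t * |c| :=
          mul_le_mul (mul_le_mul h5 h2 (abs_nonneg _) hBnn) le_rfl h4
            (mul_nonneg hBnn (hpos t))
      _ = |c| * B * u t := by ring
  -- initial condition
  have hu0 : u t₀ = 0 := by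
    have h1 := hK t₀
    have h2 : Ix * (Ωx t₀)^2 + Iz * (Ωz t₀)^2 = 0 := by linarith [ht₀]
    have hx0 : Ωx t₀ = 0 := by
      have hsq : (Ωx t₀)^2 = 0 := by nlinarith [sq_nonneg (Ωx t₀), sq_nonneg (Ωz t₀)]
      exact pow_eq_zero_iff two_ne_zero |>.mp hsq
    have hz0 : Ωz t₀ = 0 := by
      have hsq : (Ωz t₀)^2 = 0 := by nlinarith [sq_nonneg (Ωx t₀), sq_nonneg (Ωz t₀)]
      exact pow_eq_zero_iff two_ne_zero |>.mp hsq
    simp [hu_def, hx0, hz0]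
  have huz : ∀ t, u t = 0 := grow0 u u' hud hpos (|c| * B) hbound t₀ hu0
  have hxz : ∀ t, Ωx t = 0 ∧ Ωz t = 0 := by
    intro t
    have hut := huz t
    simp only [hu_def] at hut
    constructor
    · have hsq : (Ωx t)^2 = 0 := by nlinarith [sq_nonneg (Ωx t), sq_nonneg (Ωz t)]
      exact pow_eq_zero_iff two_ne_zero |>.mp hsq
    · have hsq : (Ωz t)^2 = 0 := by nlinarith [sq_nonneg (Ωx t), sq_nonneg (Ωz t)]
      exact pow_eq_zero_iff two_ne_zero |>.mp hsq
  refine ⟨hxz, ?_⟩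
  have hyconst : ∀ t s, Ωy t = Ωy s := by
    apply is_const_of_deriv_eq_zero hy
    intro t
    have := ey t
    rw [(hxz t).1] at this
    have : Iy * deriv Ωy t = 0 := by rw [this]; ring
    exact by
      have := mul_eq_zero.mp this
      rcases this with h | h
      · exact absurd h (ne_of_gt hIy)
      · exact h
  intro t s
  exact ⟨by rw [(hxz t).1, (hxz s).1], hyconst t s, by rw [(hxz t).2, (hxz s).2]⟩
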